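/- Let ν > 0, μ ∈ ℝ, let p(u) := [1 + (u/√ν + μ)²]^{−(ν+1)/2} · exp(μ(ν − 1)·arctan(u/√ν + μ)), and let F be the cumulative distribution function of the probability measure with density proportional to p. Then F is heavy-tailed at the right end: for every s > 0, lim sup_{z→∞} (1 − F(z))/e^{−sz} = ∞. -/

import Mathlib

open MeasureTheory Filter

/-- Un-normalized density of the Pearson type IV (skew t) distribution with
parameters `ν > 0` and `μ ∈ ℝ`. -/
noncomputable def pearsonIV (ν μ : ℝ) (u : ℝ) : ℝ :=
  (1 + (u / Real.sqrt ν + μ) ^ 2) ^ (-(ν + 1) / 2 : ℝ) *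
    Real.exp (μ * (ν - 1) * Real.arctan (u / Real.sqrt ν + μ))

/-- Cumulative distribution function of the probability measure whose density is
proportional to the un-normalized Pearson type IV density. -/
noncomputable def pearsonIVcdf (ν μ : ℝ) (z : ℝ) : ℝ :=
  (∫ u in Set.Iic z, pearsonIV ν μ u) / ∫ u, pearsonIV ν μ u

lemma pearsonIV_def (ν μ u : ℝ) : pearsonIV ν μ u =
    (1 + (u / Real.sqrt ν + μ) ^ 2) ^ (-(ν + 1) / 2 : ℝ) *
      Real.exp (μ * (ν - 1) * Real.arctan (u / Real.sqrt ν + μ)) := rfl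

lemma pearsonIV_pos (ν μ u : ℝ) : 0 < pearsonIV ν μ u := by
  unfold pearsonIV; positivity

lemma pearsonIV_continuous (ν μ : ℝ) : Continuous (pearsonIV ν μ) := by
  unfold pearsonIV
  have h1 : Continuous fun u : ℝ => u / Real.sqrt ν + μ := by continuity
  have h2 : Continuous fun u : ℝ => 1 + (u / Real.sqrt ν + μ) ^ 2 := by continuity
  exact (h2.rpow_const fun u => Or.inl (by positivity)).mul
    (Real.continuous_exp.comp (continuous_const.mul (Real.continuous_arctan.comp h1)))

lemma abs_arctan_le (x : ℝ) : |Real.arctan x| ≤ Real.pi / 2 := by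
  rw [abs_le]
  constructor
  · linarith [Real.neg_pi_div_two_lt_arctan x]
  · linarith [Real.arctan_lt_pi_div_two x]

lemma pearsonIV_integrable (ν μ : ℝ) (hν : 0 < ν) : Integrable (pearsonIV ν μ) := by
  have hc : (0 : ℝ) < Real.sqrt ν := Real.sqrt_pos.2 hν
  have hbase : Integrable (fun y : ℝ => (1 + y ^ 2) ^ (-(ν + 1) / 2 : ℝ)) := by
    have h := integrable_rpow_neg_one_add_norm_sq (E := ℝ) (μ := volume) (r := ν + 1)
      (by simp; linarith)
    simpa [Real.norm_eq_abs, sq_abs] using h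
  have h2 : Integrable (fun y : ℝ => (1 + (y + μ) ^ 2) ^ (-(ν + 1) / 2 : ℝ)) :=
    hbase.comp_add_right μ
  have h3 : Integrable (fun u : ℝ => (1 + (u / Real.sqrt ν + μ) ^ 2) ^ (-(ν + 1) / 2 : ℝ)) :=
    (integrable_comp_div_iff (fun y : ℝ => (1 + (y + μ) ^ 2) ^ (-(ν + 1) / 2 : ℝ)) hc.ne').2 h2
  refine (h3.const_mul (Real.exp (|μ * (ν - 1)| * (Real.pi / 2)))).mono'
    (pearsonIV_continuous ν μ).aestronglyMeasurable ?_
  filter_upwards with u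
  rw [Real.norm_eq_abs, abs_of_pos (pearsonIV_pos ν μ u)]
  unfold pearsonIV
  rw [mul_comm (Real.exp _)]
  refine mul_le_mul_of_nonneg_left (Real.exp_le_exp.2 ?_) (Real.rpow_nonneg (by positivity) _)
  calc μ * (ν - 1) * Real.arctan (u / Real.sqrt ν + μ)
      ≤ |μ * (ν - 1) * Real.arctan (u / Real.sqrt ν + μ)| := le_abs_self _
    _ = |μ * (ν - 1)| * |Real.arctan (u / Real.sqrt ν + μ)| := abs_mul _ _
    _ ≤ |μ * (ν - 1)| * (Real.pi / 2) :=
        mul_le_mul_of_nonneg_left (abs_arctan_le _) (abs_nonneg _)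

theorem pearsonIV_heavy_tailed (ν μ : ℝ) (hν : 0 < ν) :
    ∀ s : ℝ, 0 < s →
      limsup (fun z : ℝ => (((1 - pearsonIVcdf ν μ z) / Real.exp (-s * z) : ℝ) : EReal))
        atTop = ⊤ := by
  intro s hs
  set c := Real.sqrt ν with hc_def
  have hc : 0 < c := Real.sqrt_pos.2 hν
  have hp := pearsonIV_integrable ν μ hν
  set K := |μ * (ν - 1)| * (Real.pi / 2) with hK_def
  have hK0 : 0 ≤ K := by positivity
  set I := ∫ u, pearsonIV ν μ u with hI_def
  have hI : 0 < I := by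
    rw [hI_def]
    refine (integral_pos_iff_support_of_nonneg (fun u => (pearsonIV_pos ν μ u).le) hp).2 ?_
    have hsupp : Function.support (pearsonIV ν μ) = Set.univ :=
      Set.eq_univ_of_forall fun u => (pearsonIV_pos ν μ u).ne'
    simp [hsupp]
  -- tail representation
  have htail : ∀ z : ℝ, 1 - pearsonIVcdf ν μ z = (∫ u in Set.Ioi z, pearsonIV ν μ u) / I := by
    intro z
    have hsplit : (∫ u in Set.Iic z, pearsonIV ν μ u) + (∫ u in Set.Ioi z, pearsonIV ν μ u) = I :=
      intervalIntegral.integral_Iic_add_Ioi hp.integrableOn hp.integrableOn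
    rw [pearsonIVcdf, ← hI_def]
    field_simp
    linarith
  -- lower bound on the tail integral
  have hlow : ∀ z : ℝ, 0 ≤ z →
      (1 + ((z + 1) / c + |μ|) ^ 2) ^ (-(ν + 1) / 2 : ℝ) * Real.exp (-K)
        ≤ ∫ u in Set.Ioi z, pearsonIV ν μ u := by
    intro z hz
    set m := (1 + ((z + 1) / c + |μ|) ^ 2) ^ (-(ν + 1) / 2 : ℝ) * Real.exp (-K) with hm_def
    have hbound : ∀ u ∈ Set.Ioc z (z + 1), m ≤ pearsonIV ν μ u := by
      intro u hu
      rw [pearsonIV_def, hm_def]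
      have hx : |u / c + μ| ≤ (z + 1) / c + |μ| := by
        calc |u / c + μ| ≤ |u / c| + |μ| := abs_add_le _ _
          _ ≤ (z + 1) / c + |μ| := by
              have hu0 : 0 ≤ u := le_trans hz hu.1.le
              rw [abs_of_nonneg (by positivity : (0:ℝ) ≤ u / c)]
              gcongr
              exact hu.2
      have hsq : (u / c + μ) ^ 2 ≤ ((z + 1) / c + |μ|) ^ 2 := by
        rw [← sq_abs (u / c + μ)]
        exact pow_le_pow_left₀ (abs_nonneg _) hx 2
      refine mul_le_mul ?_ (Real.exp_le_exp.2 ?_) (Real.exp_pos _).le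
        (Real.rpow_nonneg (by positivity) _)
      · exact Real.rpow_le_rpow_of_nonpos (by positivity) (by linarith)
          (by rw [neg_div]; simp; positivity)
      · have : |μ * (ν - 1) * Real.arctan (u / c + μ)| ≤ K := by
          rw [abs_mul, hK_def]
          exact mul_le_mul_of_nonneg_left (abs_arctan_le _) (abs_nonneg _)
        linarith [neg_abs_le (μ * (ν - 1) * Real.arctan (u / c + μ))]
    have hμIoc : (volume (Set.Ioc z (z + 1))).toReal = 1 := by
      simp [Real.volume_Ioc]
    have h1 : m * (volume (Set.Ioc z (z + 1))).toReal ≤ ∫ u in Set.Ioc z (z + 1), pearsonIV ν μ u :=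
      setIntegral_ge_of_const_le_real measurableSet_Ioc (by simp) hbound hp.integrableOn
    have h2 : (∫ u in Set.Ioc z (z + 1), pearsonIV ν μ u) ≤ ∫ u in Set.Ioi z, pearsonIV ν μ u :=
      setIntegral_mono_set hp.integrableOn
        (Eventually.of_forall fun u => (pearsonIV_pos ν μ u).le)
        (HasSubset.Subset.eventuallyLE Set.Ioc_subset_Ioi_self)
    rw [hμIoc, mul_one] at h1
    exact h1.trans h2
  -- the constant
  set C := Real.exp (-K) * ((2 : ℝ) ^ ((ν + 1) / 2 : ℝ))⁻¹ * Real.exp (-(s * (1 + c * |μ|))) / I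
    with hC_def
  have hC : 0 < C := by rw [hC_def]; positivity
  -- eventual lower bound
  have hev : ∀ᶠ z : ℝ in atTop,
      C * (Real.exp ((s * c) * ((z + 1) / c + |μ|)) / ((z + 1) / c + |μ|) ^ ((ν + 1 : ℝ)))
        ≤ (1 - pearsonIVcdf ν μ z) / Real.exp (-s * z) := by
    filter_upwards [eventually_ge_atTop (0 : ℝ), eventually_ge_atTop c] with z hz0 hzc
    set b := (z + 1) / c + |μ| with hb_def
    have hb1 : 1 ≤ b := by
      have h1 : (1 : ℝ) ≤ z / c := (one_le_div hc).2 hzc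
      have h2 : z / c ≤ (z + 1) / c := by gcongr; linarith
      have := abs_nonneg μ
      rw [hb_def]; linarith
    have hb0 : 0 < b := lt_of_lt_of_le one_pos hb1
    -- rpow manipulations
    have hsq : (1 + b ^ 2) ^ (-(ν + 1) / 2 : ℝ) ≥
        ((2 : ℝ) ^ ((ν + 1) / 2 : ℝ))⁻¹ * (b ^ ((ν + 1 : ℝ)))⁻¹ := by
      have h1 : (1 : ℝ) + b ^ 2 ≤ 2 * b ^ 2 := by nlinarith
      have h2 : (2 * b ^ 2 : ℝ) ^ (-(ν + 1) / 2 : ℝ) ≤ (1 + b ^ 2) ^ (-(ν + 1) / 2 : ℝ) :=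
        Real.rpow_le_rpow_of_nonpos (by positivity) h1 (by rw [neg_div]; simp; positivity)
      refine le_trans (le_of_eq ?_) h2
      rw [Real.mul_rpow (by norm_num) (by positivity), ← Real.rpow_natCast b 2,
        ← Real.rpow_mul hb0.le]
      rw [show ((2 : ℕ) : ℝ) * (-(ν + 1) / 2) = -(ν + 1) by ring,
        Real.rpow_neg hb0.le, neg_div, Real.rpow_neg (by norm_num : (0:ℝ) ≤ 2)]
    -- exponential split
    have hcb : c * b = z + 1 + c * |μ| := by
      rw [hb_def]; field_simp
    have hexp : Real.exp ((s * c) * b) = Real.exp (s * (1 + c * |μ|)) * Real.exp (s * z) := by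
      rw [← Real.exp_add]
      congr 1
      have : (s * c) * b = s * (c * b) := by ring
      rw [this, hcb]; ring
    have htail' := htail z
    have hlow' := hlow z hz0
    rw [← hb_def] at hlow'
    -- rewrite the target
    rw [htail', neg_mul, Real.exp_neg, div_eq_mul_inv _ (Real.exp (s*z))⁻¹, inv_inv]
    calc C * (Real.exp ((s * c) * b) / b ^ ((ν + 1 : ℝ)))
        = (Real.exp (-K) * (((2 : ℝ) ^ ((ν + 1) / 2 : ℝ))⁻¹ * (b ^ ((ν + 1 : ℝ)))⁻¹) / I) *
            Real.exp (s * z) := by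
          rw [hC_def, hexp, Real.exp_neg (s * (1 + c * |μ|))]
          field_simp
      _ ≤ ((1 + b ^ 2) ^ (-(ν + 1) / 2 : ℝ) * Real.exp (-K) / I) * Real.exp (s * z) := by
          have hnum : Real.exp (-K) * (((2 : ℝ) ^ ((ν + 1) / 2 : ℝ))⁻¹ * (b ^ ((ν + 1 : ℝ)))⁻¹)
              ≤ (1 + b ^ 2) ^ (-(ν + 1) / 2 : ℝ) * Real.exp (-K) := by
            rw [mul_comm]
            exact mul_le_mul_of_nonneg_right hsq (Real.exp_pos _).le
          exact mul_le_mul_of_nonneg_right ((div_le_div_iff_of_pos_right hI).2 hnum) (Real.exp_pos _).le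
      _ ≤ ((∫ u in Set.Ioi z, pearsonIV ν μ u) / I) * Real.exp (s * z) :=
          mul_le_mul_of_nonneg_right ((div_le_div_iff_of_pos_right hI).2 hlow') (Real.exp_pos _).le
  -- the ratio tends to infinity
  have hb_tendsto : Tendsto (fun z : ℝ => (z + 1) / c + |μ|) atTop atTop := by
    apply tendsto_atTop_add_const_right
    exact (tendsto_atTop_add_const_right atTop 1 tendsto_id).atTop_div_const hc
  have hg : Tendsto (fun z : ℝ =>
      C * (Real.exp ((s * c) * ((z + 1) / c + |μ|)) / ((z + 1) / c + |μ|) ^ ((ν + 1 : ℝ))))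
      atTop atTop :=
    ((tendsto_exp_mul_div_rpow_atTop (ν + 1) (s * c) (by positivity)).comp
      hb_tendsto).const_mul_atTop hC
  have hratio : Tendsto (fun z : ℝ => (1 - pearsonIVcdf ν μ z) / Real.exp (-s * z)) atTop atTop :=
    tendsto_atTop_mono' atTop hev hg
  have hTop : Tendsto (fun z : ℝ =>
      (((1 - pearsonIVcdf ν μ z) / Real.exp (-s * z) : ℝ) : EReal)) atTop (nhds ⊤) := by
    rw [EReal.tendsto_nhds_top_iff_real]
    intro x
    filter_upwards [hratio.eventually_gt_atTop x] with z hz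
    exact_mod_cast hz
  exact hTop.limsup_eq
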